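/- Let X₁, X₂, Y₁, Y₂ be bounded metric spaces such that d_GH(Y₁,X₁) + d_GH(X₁,X₂) + d_GH(X₂,Y₂) = d_GH(Y₁,Y₂) (that is, the metric segment [X₁,X₂] is contained in [Y₁,Y₂] with X₁ between Y₁ and X₂ and X₂ between X₁ and Y₂). Then min{ d_GH(Y₁,X₁), d_GH(X₂,Y₂) } ≤ max{ diam X₁, diam X₂ }; consequently, no metric segment with bounded endpoints can be infinitely extended beyond both of its endpoints. -/

import Mathlib

open Metric Set
open scoped ENNReal

/-- A correspondence between `X` and `Y`: a relation whose projections are surjective. -/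
def IsCorrespondence {X Y : Type*} (R : Set (X × Y)) : Prop :=
  (∀ x : X, ∃ y : Y, (x, y) ∈ R) ∧ (∀ y : Y, ∃ x : X, (x, y) ∈ R)

/-- The distortion of a relation `R ⊆ X × Y`. -/
noncomputable def corrDistortion {X Y : Type*} [MetricSpace X] [MetricSpace Y]
    (R : Set (X × Y)) : ℝ≥0∞ :=
  ⨆ p ∈ R, ⨆ q ∈ R, ENNReal.ofReal |dist p.1 q.1 - dist p.2 q.2|

/-- The Gromov–Hausdorff distance between (arbitrary) metric spaces:
half the infimum of distortions of correspondences. -/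
noncomputable def ghDist (X Y : Type*) [MetricSpace X] [MetricSpace Y] : ℝ≥0∞ :=
  (⨅ (R : Set (X × Y)) (_ : IsCorrespondence R), corrDistortion R) / 2

lemma ghDist_le_half_max (X Y : Type*) [MetricSpace X] [MetricSpace Y]
    [Nonempty X] [Nonempty Y] :
    ghDist X Y ≤ max (EMetric.diam (univ : Set X)) (EMetric.diam (univ : Set Y)) / 2 := by
  have hc : IsCorrespondence (univ : Set (X × Y)) :=
    ⟨fun x => ⟨Classical.arbitrary Y, trivial⟩, fun y => ⟨Classical.arbitrary X, trivial⟩⟩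
  have h1 : corrDistortion (univ : Set (X × Y))
      ≤ max (EMetric.diam (univ : Set X)) (EMetric.diam (univ : Set Y)) := by
    refine iSup₂_le fun p _ => iSup₂_le fun q _ => ?_
    have habs : |dist p.1 q.1 - dist p.2 q.2| ≤ max (dist p.1 q.1) (dist p.2 q.2) := by
      rw [abs_sub_le_iff]
      constructor
      · exact (sub_le_self _ dist_nonneg).trans (le_max_left _ _)
      · exact (sub_le_self _ dist_nonneg).trans (le_max_right _ _)
    calc ENNReal.ofReal |dist p.1 q.1 - dist p.2 q.2|
        ≤ ENNReal.ofReal (max (dist p.1 q.1) (dist p.2 q.2)) := ENNReal.ofReal_le_ofReal habs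
      _ = max (ENNReal.ofReal (dist p.1 q.1)) (ENNReal.ofReal (dist p.2 q.2)) := by
          exact Monotone.map_max (fun _ _ h => ENNReal.ofReal_le_ofReal h)
      _ ≤ _ := by
          apply max_le_max
          · rw [← edist_dist]; exact EMetric.edist_le_diam_of_mem trivial trivial
          · rw [← edist_dist]; exact EMetric.edist_le_diam_of_mem trivial trivial
  exact ENNReal.div_le_div_right ((iInf₂_le _ hc).trans h1) 2

lemma two_mul_ghDist (X Y : Type*) [MetricSpace X] [MetricSpace Y] :
    2 * ghDist X Y = ⨅ (R : Set (X × Y)) (_ : IsCorrespondence R), corrDistortion R := by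
  rw [ghDist, ENNReal.mul_div_cancel' (by norm_num) (by norm_num)]

lemma diam_le_corr {X Y : Type*} [MetricSpace X] [MetricSpace Y]
    {R : Set (X × Y)} (hR : IsCorrespondence R) :
    EMetric.diam (univ : Set X) ≤ EMetric.diam (univ : Set Y) + corrDistortion R := by
  refine EMetric.diam_le fun x _ x' _ => ?_
  obtain ⟨y, hy⟩ := hR.1 x
  obtain ⟨y', hy'⟩ := hR.1 x'
  have h1 : dist x x' ≤ dist y y' + |dist x x' - dist y y'| := by
    have := le_abs_self (dist x x' - dist y y'); linarith
  calc edist x x' = ENNReal.ofReal (dist x x') := edist_dist _ _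
    _ ≤ ENNReal.ofReal (dist y y') + ENNReal.ofReal |dist x x' - dist y y'| := by
        rw [← ENNReal.ofReal_add dist_nonneg (abs_nonneg _)]
        exact ENNReal.ofReal_le_ofReal h1
    _ ≤ EMetric.diam (univ : Set Y) + corrDistortion R := by
        apply add_le_add
        · rw [← edist_dist]; exact EMetric.edist_le_diam_of_mem trivial trivial
        · calc ENNReal.ofReal |dist x x' - dist y y'|
              = ENNReal.ofReal |dist (x,y).1 (x',y').1 - dist (x,y).2 (x',y').2| := rfl
            _ ≤ corrDistortion R := by
                refine le_trans ?_ (le_iSup₂ (f := fun p (_ : p ∈ R) =>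
                  ⨆ q ∈ R, ENNReal.ofReal |dist p.1 q.1 - dist p.2 q.2|) (x,y) hy)
                exact le_iSup₂ (f := fun q (_ : q ∈ R) =>
                  ENNReal.ofReal |dist (x,y).1 q.1 - dist (x,y).2 q.2|) (x',y') hy'

lemma diam_le_corr' {X Y : Type*} [MetricSpace X] [MetricSpace Y]
    {R : Set (X × Y)} (hR : IsCorrespondence R) :
    EMetric.diam (univ : Set Y) ≤ EMetric.diam (univ : Set X) + corrDistortion R := by
  refine EMetric.diam_le fun y _ y' _ => ?_
  obtain ⟨x, hx⟩ := hR.2 y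
  obtain ⟨x', hx'⟩ := hR.2 y'
  have h1 : dist y y' ≤ dist x x' + |dist x x' - dist y y'| := by
    have := neg_abs_le (dist x x' - dist y y'); linarith
  calc edist y y' = ENNReal.ofReal (dist y y') := edist_dist _ _
    _ ≤ ENNReal.ofReal (dist x x') + ENNReal.ofReal |dist x x' - dist y y'| := by
        rw [← ENNReal.ofReal_add dist_nonneg (abs_nonneg _)]
        exact ENNReal.ofReal_le_ofReal h1
    _ ≤ EMetric.diam (univ : Set X) + corrDistortion R := by
        apply add_le_add
        · rw [← edist_dist]; exact EMetric.edist_le_diam_of_mem trivial trivial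
        · refine le_trans ?_ (le_iSup₂ (f := fun p (_ : p ∈ R) =>
            ⨆ q ∈ R, ENNReal.ofReal |dist p.1 q.1 - dist p.2 q.2|) (x,y) hx)
          exact le_iSup₂ (f := fun q (_ : q ∈ R) =>
            ENNReal.ofReal |dist (x,y).1 q.1 - dist (x,y).2 q.2|) (x',y') hx'

lemma diam_le_add_two_ghDist (X Y : Type*) [MetricSpace X] [MetricSpace Y] :
    EMetric.diam (univ : Set X) ≤ EMetric.diam (univ : Set Y) + 2 * ghDist X Y := by
  rw [two_mul_ghDist]
  simp only [ENNReal.add_iInf]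
  exact le_iInf₂ fun R hR => diam_le_corr hR

lemma diam_le_add_two_ghDist' (X Y : Type*) [MetricSpace X] [MetricSpace Y] :
    EMetric.diam (univ : Set Y) ≤ EMetric.diam (univ : Set X) + 2 * ghDist X Y := by
  rw [two_mul_ghDist]
  simp only [ENNReal.add_iInf]
  exact le_iInf₂ fun R hR => diam_le_corr' hR


/-- if the metric segment `[X₁, X₂]` (with bounded endpoints) is contained
in `[Y₁, Y₂]` with `X₁` between `Y₁` and `X₂`, and `X₂` between `X₁` and `Y₂`, then
`min {d_GH(Y₁,X₁), d_GH(X₂,Y₂)} ≤ max {diam X₁, diam X₂}`; hence no metric segment with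
bounded endpoints can be infinitely extended beyond both of its endpoints. -/
theorem stmt19 {X₁ X₂ Y₁ Y₂ : Type*}
    [MetricSpace X₁] [MetricSpace X₂] [MetricSpace Y₁] [MetricSpace Y₂]
    [Nonempty X₁] [Nonempty X₂] [Nonempty Y₁] [Nonempty Y₂]
    (hX₁b : EMetric.diam (Set.univ : Set X₁) ≠ ⊤)
    (hX₂b : EMetric.diam (Set.univ : Set X₂) ≠ ⊤)
    (hY₁b : EMetric.diam (Set.univ : Set Y₁) ≠ ⊤)
    (hY₂b : EMetric.diam (Set.univ : Set Y₂) ≠ ⊤)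
    (hseg : ghDist Y₁ X₁ + ghDist X₁ X₂ + ghDist X₂ Y₂ = ghDist Y₁ Y₂) :
    min (ghDist Y₁ X₁) (ghDist X₂ Y₂)
      ≤ ENNReal.ofReal
          (max (Metric.diam (Set.univ : Set X₁)) (Metric.diam (Set.univ : Set X₂))) := by
  set a := ghDist Y₁ X₁ with ha_def
  set b := ghDist X₁ X₂ with hb_def
  set c := ghDist X₂ Y₂ with hc_def
  have hRHS : ENNReal.ofReal
      (max (Metric.diam (Set.univ : Set X₁)) (Metric.diam (Set.univ : Set X₂)))
      = max (EMetric.diam (univ : Set X₁)) (EMetric.diam (univ : Set X₂)) := by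
    rw [Metric.diam, Metric.diam,
      Monotone.map_max (fun _ _ h => ENNReal.ofReal_le_ofReal h)]
    exact congrArg₂ max (ENNReal.ofReal_toReal hX₁b) (ENNReal.ofReal_toReal hX₂b)
  rw [hRHS]
  rcases le_total (EMetric.diam (univ : Set Y₂)) (EMetric.diam (univ : Set Y₁)) with h | h
  · have hmax : max (EMetric.diam (univ : Set Y₁)) (EMetric.diam (univ : Set X₁)) ≠ ⊤ :=
      (max_lt hY₁b.lt_top hX₁b.lt_top).ne
    have ha_ne : a ≠ ⊤ :=
      ((ghDist_le_half_max Y₁ X₁).trans_lt (ENNReal.div_lt_top hmax two_ne_zero)).ne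
    have h1 : a + (b + c) ≤ a + EMetric.diam (univ : Set X₁) / 2 := by
      calc a + (b + c) = a + b + c := by ring
        _ = ghDist Y₁ Y₂ := hseg
        _ ≤ max (EMetric.diam (univ : Set Y₁)) (EMetric.diam (univ : Set Y₂)) / 2 :=
            ghDist_le_half_max _ _
        _ = EMetric.diam (univ : Set Y₁) / 2 := by rw [max_eq_left h]
        _ ≤ (EMetric.diam (univ : Set X₁) + 2 * a) / 2 :=
            ENNReal.div_le_div_right (diam_le_add_two_ghDist Y₁ X₁) 2
        _ = EMetric.diam (univ : Set X₁) / 2 + a := by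
            rw [ENNReal.add_div, mul_comm (2:ℝ≥0∞) _, mul_div_assoc, ENNReal.div_self two_ne_zero (by norm_num), mul_one]
        _ = a + EMetric.diam (univ : Set X₁) / 2 := add_comm _ _
    have h2 : b + c ≤ EMetric.diam (univ : Set X₁) / 2 :=
      (WithTop.add_le_add_iff_left ha_ne).mp h1
    calc min a c ≤ c := min_le_right _ _
      _ ≤ b + c := le_add_self
      _ ≤ EMetric.diam (univ : Set X₁) / 2 := h2
      _ ≤ EMetric.diam (univ : Set X₁) := ENNReal.half_le_self
      _ ≤ _ := le_max_left _ _
  · have hmax : max (EMetric.diam (univ : Set X₂)) (EMetric.diam (univ : Set Y₂)) ≠ ⊤ :=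
      (max_lt hX₂b.lt_top hY₂b.lt_top).ne
    have hc_ne : c ≠ ⊤ :=
      ((ghDist_le_half_max X₂ Y₂).trans_lt (ENNReal.div_lt_top hmax two_ne_zero)).ne
    have h1 : c + (a + b) ≤ c + EMetric.diam (univ : Set X₂) / 2 := by
      calc c + (a + b) = a + b + c := by ring
        _ = ghDist Y₁ Y₂ := hseg
        _ ≤ max (EMetric.diam (univ : Set Y₁)) (EMetric.diam (univ : Set Y₂)) / 2 :=
            ghDist_le_half_max _ _
        _ = EMetric.diam (univ : Set Y₂) / 2 := by rw [max_eq_right h]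
        _ ≤ (EMetric.diam (univ : Set X₂) + 2 * c) / 2 :=
            ENNReal.div_le_div_right (diam_le_add_two_ghDist' X₂ Y₂) 2
        _ = EMetric.diam (univ : Set X₂) / 2 + c := by
            rw [ENNReal.add_div, mul_comm (2:ℝ≥0∞) _, mul_div_assoc, ENNReal.div_self two_ne_zero (by norm_num), mul_one]
        _ = c + EMetric.diam (univ : Set X₂) / 2 := add_comm _ _
    have h2 : a + b ≤ EMetric.diam (univ : Set X₂) / 2 :=
      (WithTop.add_le_add_iff_left hc_ne).mp h1
    calc min a c ≤ a := min_le_left _ _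
      _ ≤ a + b := le_self_add
      _ ≤ EMetric.diam (univ : Set X₂) / 2 := h2
      _ ≤ EMetric.diam (univ : Set X₂) := ENNReal.half_le_self
      _ ≤ _ := le_max_right _ _
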